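/- arXiv:1608.01662 — 4 statements merged into one kernel-verified Lean document; each statement's English description precedes it below -/
import Mathlib

section
/- The series \sum_{n=1}^{\infty} 1/a_n^2 converges if and only if p > 3/4. -/
open Finset Filter

theorem stmt3 (p : ℝ) (hp0 : 0 < p) (hp1 : p ≤ 1) (a : ℕ → ℝ)
    (ha : ∀ n, 1 ≤ n → a n = ∏ j ∈ Finset.Icc 1 (n - 1), (1 + (2 * p - 1) / (j : ℝ))) :
    (Summable fun n : ℕ => 1 / (a (n + 1)) ^ 2) ↔ 3 / 4 < p := by
  set q : ℝ := 2 * p - 1 with hq_def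
  have hqm1 : -1 < q := by rw [hq_def]; linarith
  have hq1 : q ≤ 1 := by rw [hq_def]; linarith
  set Q : ℕ → ℝ := fun n => ∏ j ∈ Finset.Icc 1 n, (1 + q / (j : ℝ)) with hQdef
  have hfac : ∀ j : ℕ, 1 ≤ j → 0 < 1 + q / (j : ℝ) := by
    intro j hj
    have hj' : (1:ℝ) ≤ (j:ℝ) := by exact_mod_cast hj
    have hj0 : (0:ℝ) < (j:ℝ) := by linarith
    rw [show 1 + q / (j:ℝ) = ((j:ℝ) + q) / j by field_simp]
    exact div_pos (by linarith) hj0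
  have hQpos : ∀ n, 0 < Q n := by
    intro n
    exact Finset.prod_pos (fun j hj => hfac j (Finset.mem_Icc.mp hj).1)
  have haQ : ∀ n : ℕ, a (n+1) = Q n := by
    intro n
    rw [ha (n+1) (by omega)]
    simp [hQdef]
  have hform : (Summable fun n : ℕ => 1 / (a (n + 1)) ^ 2) ↔
      Summable fun n : ℕ => 1 / (Q n) ^ 2 := by
    apply summable_congr; intro n; rw [haQ]
  rw [hform]
  have hQsucc : ∀ n : ℕ, Q (n+1) = Q n * (1 + q / ((n:ℝ)+1)) := by
    intro n
    show (∏ j ∈ Finset.Icc 1 (n+1), (1 + q / (j:ℝ)))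
        = (∏ j ∈ Finset.Icc 1 n, (1 + q / (j:ℝ))) * (1 + q / ((n:ℝ)+1))
    rw [Finset.prod_Icc_succ_top (by omega : 1 ≤ n + 1)]
    push_cast
    ring
  -- lower bound
  have hlow : 0 ≤ q → ∀ n : ℕ, ((n:ℝ)+1) ^ q ≤ Q n := by
    intro hq0 n
    induction n with
    | zero => simp [hQdef]
    | succ n ih =>
      rw [hQsucc]
      have hx : (0:ℝ) < (n:ℝ) + 1 := by positivity
      have hfac' : 0 < 1 + q / ((n:ℝ)+1) := by
        have := hfac (n+1) (by omega)
        push_cast at this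
        exact this
      have key : ((n:ℝ)+2) ^ q ≤ (((n:ℝ)+1)) ^ q * (1 + q / ((n:ℝ)+1)) := by
        have h1 : ((n:ℝ)+2) = ((n:ℝ)+1) * (1 + 1/((n:ℝ)+1)) := by field_simp; ring
        rw [h1, Real.mul_rpow (by positivity) (by positivity)]
        have hs : (-1:ℝ) ≤ 1/((n:ℝ)+1) := by
          have h0 : (0:ℝ) ≤ 1/((n:ℝ)+1) := by positivity
          linarith
        have hber : (1 + 1/((n:ℝ)+1)) ^ q ≤ 1 + q * (1/((n:ℝ)+1)) :=
          rpow_one_add_le_one_add_mul_self hs hq0 hq1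
        have := mul_le_mul_of_nonneg_left hber (by positivity : (0:ℝ) ≤ ((n:ℝ)+1) ^ q)
        calc ((n:ℝ)+1) ^ q * (1 + 1/((n:ℝ)+1)) ^ q
            ≤ ((n:ℝ)+1) ^ q * (1 + q * (1/((n:ℝ)+1))) := this
          _ = ((n:ℝ)+1) ^ q * (1 + q / ((n:ℝ)+1)) := by ring
      have : (((n:ℝ)+1)) ^ q * (1 + q / ((n:ℝ)+1)) ≤ Q n * (1 + q / ((n:ℝ)+1)) :=
        mul_le_mul_of_nonneg_right ih hfac'.le
      push_cast
      calc ((n:ℝ)+1+1) ^ q = ((n:ℝ)+2) ^ q := by ring_nf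
        _ ≤ ((n:ℝ)+1) ^ q * (1 + q / ((n:ℝ)+1)) := key
        _ ≤ Q n * (1 + q / ((n:ℝ)+1)) := this
  -- upper bound via harmonic numbers
  have hup : ∀ n : ℕ, Q n ≤ Real.exp (q * (harmonic n : ℝ)) := by
    intro n
    have step1 : Q n ≤ ∏ j ∈ Finset.Icc 1 n, Real.exp (q / (j:ℝ)) := by
      apply Finset.prod_le_prod
      · intro j hj; exact (hfac j (Finset.mem_Icc.mp hj).1).le
      · intro j hj
        rw [add_comm]
        exact Real.add_one_le_exp _
    rw [← Real.exp_sum] at step1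
    have : ∑ j ∈ Finset.Icc 1 n, q / (j:ℝ) = q * (harmonic n : ℝ) := by
      rw [harmonic_eq_sum_Icc]
      push_cast
      rw [Finset.mul_sum]
      exact Finset.sum_congr rfl fun j hj => div_eq_mul_inv q _
    rwa [this] at step1
  have hupper : q ≤ 1/2 → ∀ n : ℕ, Q n ≤ 3 * ((n:ℝ)+1) ^ ((1:ℝ)/2) := by
    intro hq2 n
    have hpow1 : (1:ℝ) ≤ ((n:ℝ)+1) ^ ((1:ℝ)/2) := by
      have hn0 : (0:ℝ) ≤ (n:ℝ) := Nat.cast_nonneg n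
      exact Real.one_le_rpow (by linarith) (by norm_num)
    have hharm : (0:ℝ) ≤ (harmonic n : ℝ) := by
      have : (0:ℚ) ≤ harmonic n := by
        unfold harmonic
        positivity
      exact_mod_cast this
    rcases le_or_gt q 0 with hq0 | hq0
    · have : Q n ≤ Real.exp (q * (harmonic n : ℝ)) := hup n
      have h1 : Real.exp (q * (harmonic n : ℝ)) ≤ 1 := by
        rw [← Real.exp_zero]
        apply Real.exp_le_exp.mpr
        exact mul_nonpos_of_nonpos_of_nonneg hq0 hharm
      nlinarith
    · have hH : (harmonic n : ℝ) ≤ 1 + Real.log ((n:ℝ)+1) := by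
        rcases Nat.eq_zero_or_pos n with rfl | hn
        · simp [harmonic]
        · have h1 := harmonic_le_one_add_log n
          have h2 : Real.log (n:ℝ) ≤ Real.log ((n:ℝ)+1) := by
            apply Real.log_le_log (by exact_mod_cast hn)
            linarith
          linarith
      have h3 : Q n ≤ Real.exp (q * (1 + Real.log ((n:ℝ)+1))) := by
        refine (hup n).trans ?_
        apply Real.exp_le_exp.mpr
        exact mul_le_mul_of_nonneg_left hH hq0.le
      have h4 : Real.exp (q * (1 + Real.log ((n:ℝ)+1)))
          = Real.exp q * ((n:ℝ)+1) ^ q := by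
        rw [Real.rpow_def_of_pos (by positivity), mul_add, Real.exp_add, mul_one,
          mul_comm q (Real.log ((n:ℝ)+1))]
      have h5 : Real.exp q ≤ 3 := by
        have := Real.exp_one_lt_d9
        have h6 : Real.exp q ≤ Real.exp 1 := Real.exp_le_exp.mpr hq1
        linarith
      have h7 : ((n:ℝ)+1) ^ q ≤ ((n:ℝ)+1) ^ ((1:ℝ)/2) :=
        Real.rpow_le_rpow_of_exponent_le
          (by have hn0 : (0:ℝ) ≤ (n:ℝ) := Nat.cast_nonneg n; linarith) hq2
      have h8 : (0:ℝ) ≤ ((n:ℝ)+1) ^ q := by positivity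
      calc Q n ≤ Real.exp q * ((n:ℝ)+1) ^ q := by rw [← h4]; exact h3
        _ ≤ 3 * ((n:ℝ)+1) ^ ((1:ℝ)/2) := by nlinarith
  -- divergence
  have hdiv : q ≤ 1/2 → ¬ Summable (fun n : ℕ => 1 / (Q n)^2) := by
    intro hq2 hsum
    have hcomp : ∀ n : ℕ, 1/(9 * ((n:ℝ)+1)) ≤ 1 / (Q n)^2 := by
      intro n
      apply one_div_le_one_div_of_le (pow_pos (hQpos n) 2)
      have h1 := hupper hq2 n
      have h2 : (Q n)^2 ≤ (3 * ((n:ℝ)+1) ^ ((1:ℝ)/2))^2 :=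
        pow_le_pow_left₀ (hQpos n).le h1 2
      calc (Q n)^2 ≤ (3 * ((n:ℝ)+1) ^ ((1:ℝ)/2))^2 := h2
        _ = 9 * (((n:ℝ)+1) ^ ((1:ℝ)/2))^(2:ℕ) := by ring
        _ = 9 * ((n:ℝ)+1) := by
            rw [← Real.rpow_natCast (((n:ℝ)+1) ^ ((1:ℝ)/2)) 2,
              ← Real.rpow_mul (by positivity)]
            norm_num
    have hsum2 : Summable (fun n : ℕ => 1/(9 * ((n:ℝ)+1))) :=
      Summable.of_nonneg_of_le (fun n => by positivity) hcomp hsum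
    have hsum3 : Summable (fun n : ℕ => 1/(((n:ℝ)+1))) := by
      have := hsum2.mul_left 9
      apply this.congr
      intro n
      field_simp
    have hsum4 : Summable (fun n : ℕ => 1 / ((n+1 : ℕ):ℝ)) := by
      apply hsum3.congr
      intro n
      push_cast
      ring
    exact Real.not_summable_one_div_natCast ((summable_nat_add_iff 1).mp hsum4)
  -- convergence
  have hconv : 1/2 < q → Summable (fun n : ℕ => 1 / (Q n)^2) := by
    intro hq2
    have hq0 : (0:ℝ) ≤ q := by linarith
    have hbig : Summable (fun n : ℕ => 1 / ((n:ℝ)+1) ^ (q*2)) := by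
      have h := Real.summable_one_div_nat_rpow.mpr (by linarith : 1 < q*2)
      have h2 := (summable_nat_add_iff 1).mpr h
      apply h2.congr
      intro n
      push_cast
      ring_nf
    apply Summable.of_nonneg_of_le (fun n => by positivity) ?_ hbig
    intro n
    apply one_div_le_one_div_of_le (by positivity)
    have h1 := hlow hq0 n
    calc ((n:ℝ)+1) ^ (q*2) = (((n:ℝ)+1) ^ q)^(2:ℕ) := by
          rw [← Real.rpow_natCast (((n:ℝ)+1) ^ q) 2,
            ← Real.rpow_mul (by positivity)]
          norm_num
      _ ≤ (Q n)^2 := pow_le_pow_left₀ (by positivity) h1 2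
  constructor
  · intro hs
    by_contra hp34
    exact hdiv (by rw [hq_def]; linarith [not_lt.mp hp34]) hs
  · intro hp34
    exact hconv (by rw [hq_def]; linarith)
end

section
/- For the elephant random walk, E[X_n] = (2q-1) \Gamma(n + 2p - 1)/(\Gamma(2p)\Gamma(n)) for all n \ge 1. -/
open Finset Filter MeasureTheory

theorem stmt9 {Ω : Type*} {m0 : MeasurableSpace Ω} (μ : Measure Ω) [IsProbabilityMeasure μ]
    (ℱ : Filtration ℕ m0) (p q : ℝ) (hp0 : 0 < p) (hp1 : p ≤ 1) (hq : q ∈ Set.Icc (0 : ℝ) 1)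
    (η : ℕ → Ω → ℝ)
    (hval : ∀ n, 1 ≤ n → ∀ ω, η n ω = 1 ∨ η n ω = -1)
    (hadapt : ∀ n, 1 ≤ n → StronglyMeasurable[ℱ n] (η n))
    (hη1 : ∫ ω, η 1 ω ∂μ = 2 * q - 1)
    (hcond : ∀ n, 1 ≤ n →
      μ[η (n + 1) | ℱ n] =ᵐ[μ] fun ω => (2 * p - 1) * (∑ k ∈ Finset.Icc 1 n, η k ω) / n)
    (X : ℕ → Ω → ℝ) (hX : ∀ n ω, X n ω = ∑ k ∈ Finset.Icc 1 n, η k ω) :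
    ∀ n, 1 ≤ n →
      ∫ ω, X n ω ∂μ =
        (2 * q - 1) * Real.Gamma ((n : ℝ) + 2 * p - 1) / (Real.Gamma (2 * p) * Real.Gamma n) := by
  have hηint : ∀ k, 1 ≤ k → Integrable (η k) μ := by
    intro k hk
    refine ⟨((hadapt k hk).mono (ℱ.le k)).aestronglyMeasurable, ?_⟩
    refine HasFiniteIntegral.of_bounded (C := 1) (Filter.Eventually.of_forall fun ω => ?_)
    rcases hval k hk ω with h | h <;> simp [h]
  have hXint : ∀ n, Integrable (fun ω => ∑ k ∈ Finset.Icc 1 n, η k ω) μ := by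
    intro n
    exact integrable_finset_sum _ fun k hk => hηint k (Finset.mem_Icc.1 hk).1
  intro n hn
  induction n, hn using Nat.le_induction with
  | base =>
    have hΓ : Real.Gamma (2 * p) ≠ 0 :=
      (Real.Gamma_pos_of_pos (by linarith)).ne'
    simp only [hX, Nat.cast_one, Finset.Icc_self, Finset.sum_singleton, hη1]
    rw [show (1 : ℝ) + 2 * p - 1 = 2 * p by ring, Real.Gamma_one]
    field_simp
  | succ n hn ih =>
    have hηι : ∫ ω, η (n + 1) ω ∂μ
        = (2 * p - 1) / n * ∫ ω, X n ω ∂μ := by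
      rw [← integral_condExp (ℱ.le n),
        integral_congr_ae (hcond n hn)]
      simp only [hX]
      rw [integral_div, integral_const_mul]
      ring
    have hsplit : ∫ ω, X (n + 1) ω ∂μ = ∫ ω, X n ω ∂μ + ∫ ω, η (n + 1) ω ∂μ := by
      have : ∀ ω, X (n + 1) ω = X n ω + η (n + 1) ω := by
        intro ω
        rw [hX, hX, Finset.sum_Icc_succ_top (by omega)]
      rw [integral_congr_ae (Filter.Eventually.of_forall this),
        integral_add ((hXint n).congr (Filter.Eventually.of_forall fun ω => (hX n ω).symm)) (hηint (n + 1) (by omega))]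
    have hnR : (0 : ℝ) < n := by exact_mod_cast hn
    have key : ∫ ω, X (n + 1) ω ∂μ = ((n : ℝ) + 2 * p - 1) / n * ∫ ω, X n ω ∂μ := by
      rw [hsplit, hηι]; field_simp; ring
    have hΓn : Real.Gamma ((n : ℝ) + 1) = n * Real.Gamma n := Real.Gamma_add_one hnR.ne'
    have hΓp : Real.Gamma ((n : ℝ) + 1 + 2 * p - 1) = ((n : ℝ) + 2 * p - 1) * Real.Gamma ((n : ℝ) + 2 * p - 1) := by
      rw [show (n : ℝ) + 1 + 2 * p - 1 = ((n : ℝ) + 2 * p - 1) + 1 by ring,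
        Real.Gamma_add_one (by
          have h1 : (1:ℝ) ≤ n := by exact_mod_cast hn
          intro h; linarith)]
    have hΓnpos : Real.Gamma (n : ℝ) ≠ 0 := (Real.Gamma_pos_of_pos hnR).ne'
    rw [key, ih, Nat.cast_add, Nat.cast_one, hΓp, hΓn]
    field_simp
end

section
/- (Strong law of large numbers for the ERW) For every p \in [0,1) and q \in [0,1], (X_n - E[X_n])/n \to 0 almost surely as n \to \infty. -/
set_option maxHeartbeats 1000000

open Finset Filter MeasureTheory Topology NNReal ENNReal

lemma erw_wavg {b : ℕ → ℝ} (hmono : Monotone b) (hpos : 0 < b 0)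
    (htop : Tendsto b atTop atTop) {v : ℕ → ℝ} {s : ℝ} (hv : Tendsto v atTop (𝓝 s)) :
    Tendsto (fun n => (∑ i ∈ range n, (b (i + 1) - b i) * v i) / b n) atTop (𝓝 s) := by
  have hbpos : ∀ n, 0 < b n := fun n => lt_of_lt_of_le hpos (hmono (Nat.zero_le n))
  have hinv : Tendsto (fun n => (b n)⁻¹) atTop (𝓝 0) := htop.inv_tendsto_atTop
  have h1 : Tendsto (fun n => (∑ i ∈ range n, (b (i + 1) - b i) * (v i - s)) / b n)
      atTop (𝓝 0) := by
    rw [Metric.tendsto_atTop]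
    intro ε hε
    obtain ⟨K, hK⟩ := Metric.tendsto_atTop.1 hv (ε / 2) (by positivity)
    set C := ∑ i ∈ range K, (b (i + 1) - b i) * |v i - s| with hC
    have hC0 : 0 ≤ C := Finset.sum_nonneg fun i _ =>
      mul_nonneg (sub_nonneg.2 (hmono (Nat.le_succ i))) (abs_nonneg _)
    obtain ⟨N, hN⟩ := (htop.eventually_ge_atTop (2 * C / ε + 1)).exists
    refine ⟨max N K, fun n hn => ?_⟩
    have hnK : K ≤ n := le_trans (le_max_right _ _) hn
    have hnN : N ≤ n := le_trans (le_max_left _ _) hn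
    have hbn : 0 < b n := hbpos n
    have hbnN : 2 * C / ε + 1 ≤ b n := le_trans hN (hmono hnN)
    rw [Real.dist_eq, sub_zero, abs_div, abs_of_pos hbn]
    have hsplit : ∑ i ∈ range n, (b (i + 1) - b i) * (v i - s)
        = (∑ i ∈ range K, (b (i + 1) - b i) * (v i - s))
          + ∑ i ∈ Ico K n, (b (i + 1) - b i) * (v i - s) :=
      (Finset.sum_range_add_sum_Ico _ hnK).symm
    have habs : |∑ i ∈ range n, (b (i + 1) - b i) * (v i - s)| ≤ C + ε / 2 * b n := by
      rw [hsplit]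
      refine le_trans (abs_add_le _ _) (add_le_add ?_ ?_)
      · refine le_trans (Finset.abs_sum_le_sum_abs _ _) ?_
        refine le_of_eq (Finset.sum_congr rfl fun i _ => ?_)
        rw [abs_mul, abs_of_nonneg (sub_nonneg.2 (hmono (Nat.le_succ i)))]
      · refine le_trans (Finset.abs_sum_le_sum_abs _ _) ?_
        have hstep : ∀ i ∈ Ico K n, |(b (i + 1) - b i) * (v i - s)|
            ≤ (b (i + 1) - b i) * (ε / 2) := by
          intro i hi
          rw [abs_mul, abs_of_nonneg (sub_nonneg.2 (hmono (Nat.le_succ i)))]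
          refine mul_le_mul_of_nonneg_left ?_ (sub_nonneg.2 (hmono (Nat.le_succ i)))
          have := hK i (Finset.mem_Ico.1 hi).1
          rw [Real.dist_eq] at this
          exact this.le
        refine le_trans (Finset.sum_le_sum hstep) ?_
        rw [← Finset.sum_mul]
        have htel : ∑ i ∈ Ico K n, (b (i + 1) - b i) = b n - b K := by
          rw [Finset.sum_Ico_eq_sub _ hnK, Finset.sum_range_sub b, Finset.sum_range_sub b]
          ring
        rw [htel, mul_comm]
        refine mul_le_mul_of_nonneg_left ?_ (by positivity)
        have := hbpos K
        linarith
    have hmul : C + ε / 2 ≤ ε / 2 * b n := by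
      have hCe : ε / 2 * (2 * C / ε + 1) = C + ε / 2 := by field_simp
      calc C + ε / 2 = ε / 2 * (2 * C / ε + 1) := hCe.symm
        _ ≤ ε / 2 * b n := mul_le_mul_of_nonneg_left hbnN (by positivity)
    calc |∑ i ∈ range n, (b (i + 1) - b i) * (v i - s)| / b n
        ≤ (C + ε / 2 * b n) / b n := (div_le_div_iff_of_pos_right hbn).2 habs
      _ = C / b n + ε / 2 := by rw [add_div, mul_div_cancel_right₀ _ (ne_of_gt hbn)]
      _ < ε := by
          have : C / b n < ε / 2 := by
            rw [div_lt_iff₀ hbn]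
            nlinarith
          linarith
  have h2 : Tendsto (fun n => s - s * b 0 * (b n)⁻¹) atTop (𝓝 s) := by
    have := (tendsto_const_nhds : Tendsto (fun _ : ℕ => s) atTop (𝓝 s)).sub
      (hinv.const_mul (s * b 0))
    simpa using this
  have := h1.add h2
  rw [zero_add] at this
  refine this.congr fun n => ?_
  have hbn := hbpos n
  have htel : ∑ i ∈ range n, (b (i + 1) - b i) = b n - b 0 := Finset.sum_range_sub b n
  have hdecomp : ∑ i ∈ range n, (b (i + 1) - b i) * v i
      = (∑ i ∈ range n, (b (i + 1) - b i) * (v i - s)) + s * (b n - b 0) := by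
    rw [← htel, Finset.mul_sum, ← Finset.sum_add_distrib]
    exact Finset.sum_congr rfl fun i _ => by ring
  rw [hdecomp, add_div]
  congr 1
  field_simp

lemma erw_kron {b : ℕ → ℝ} (hmono : Monotone b) (hpos : 0 < b 0)
    (htop : Tendsto b atTop atTop) {x : ℕ → ℝ} {s : ℝ}
    (hx : Tendsto (fun n => ∑ k ∈ range n, x k / b k) atTop (𝓝 s)) :
    Tendsto (fun n => (∑ k ∈ range (n + 1), x k) / b n) atTop (𝓝 0) := by
  have hbpos : ∀ n, 0 < b n := fun n => lt_of_lt_of_le hpos (hmono (Nat.zero_le n))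
  set u : ℕ → ℝ := fun n => ∑ k ∈ range n, x k / b k with hu
  have h1 : Tendsto (fun n => u (n + 1)) atTop (𝓝 s) := hx.comp (tendsto_add_atTop_nat 1)
  have h2 : Tendsto (fun n => (∑ i ∈ range n, (b (i + 1) - b i) * u (i + 1)) / b n)
      atTop (𝓝 s) := erw_wavg hmono hpos htop h1
  have := h1.sub h2
  rw [sub_self] at this
  refine this.congr fun n => ?_
  have hparts : ∑ k ∈ range (n + 1), x k
      = b n * u (n + 1) - ∑ i ∈ range n, (b (i + 1) - b i) * u (i + 1) := by
    have hb := Finset.sum_range_by_parts b (fun k => x k / b k) (n + 1)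
    simp only [smul_eq_mul, Nat.add_sub_cancel] at hb
    have hl : ∑ i ∈ range (n + 1), b i * (x i / b i) = ∑ i ∈ range (n + 1), x i :=
      Finset.sum_congr rfl fun i _ => by
        rw [mul_div_cancel₀ _ (ne_of_gt (hbpos i))]
    rw [hl] at hb
    exact hb
  rw [hparts, _root_.sub_div, mul_div_cancel_left₀ _ (ne_of_gt (hbpos n))]

theorem stmt11 {Ω : Type*} {m0 : MeasurableSpace Ω} (μ : Measure Ω) [IsProbabilityMeasure μ]
    (ℱ : Filtration ℕ m0) (p q : ℝ) (hp0 : 0 ≤ p) (hp1 : p < 1) (hq : q ∈ Set.Icc (0 : ℝ) 1)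
    (η : ℕ → Ω → ℝ)
    (hval : ∀ n, 1 ≤ n → ∀ ω, η n ω = 1 ∨ η n ω = -1)
    (hadapt : ∀ n, 1 ≤ n → StronglyMeasurable[ℱ n] (η n))
    (hη1 : ∫ ω, η 1 ω ∂μ = 2 * q - 1)
    (hcond : ∀ n, 1 ≤ n →
      μ[η (n + 1) | ℱ n] =ᵐ[μ] fun ω => (2 * p - 1) * (∑ k ∈ Finset.Icc 1 n, η k ω) / n)
    (X : ℕ → Ω → ℝ) (hX : ∀ n ω, X n ω = ∑ k ∈ Finset.Icc 1 n, η k ω) :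
    ∀ᵐ ω ∂μ, Tendsto (fun n : ℕ => (X n ω - ∫ x, X n x ∂μ) / n) atTop (nhds 0) := by
  obtain ⟨α, hαdef⟩ : ∃ α : ℝ, α = 2 * p - 1 := ⟨_, rfl⟩
  simp only [← hαdef] at hcond
  have hα1 : α < 1 := by rw [hαdef]; linarith
  have hαm : -1 ≤ α := by rw [hαdef]; linarith
  have hαabs : |α| ≤ 1 := abs_le.2 ⟨hαm, hα1.le⟩
  -- the scaling sequence a
  set a : ℕ → ℝ := fun n => ∏ k ∈ Finset.Ico 2 n, (((k : ℝ) + α) / k) with hadef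
  have hfacpos : ∀ k : ℕ, 2 ≤ k → 0 < ((k : ℝ) + α) / k := by
    intro k hk
    have hk1 : (2 : ℝ) ≤ (k : ℝ) := by exact_mod_cast hk
    apply div_pos <;> linarith
  have hapos : ∀ n, 0 < a n :=
    fun n => Finset.prod_pos fun k hk => hfacpos k (Finset.mem_Ico.1 hk).1
  have harec : ∀ n, 2 ≤ n → a (n + 1) = a n * (((n : ℝ) + α) / n) := by
    intro n hn
    rw [hadef]
    simp only
    rw [Finset.prod_Ico_succ_top hn]
  -- measurability and bounds for η
  have hmeas : ∀ k, 1 ≤ k → StronglyMeasurable (η k) := fun k hk => (hadapt k hk).mono (ℱ.le k)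
  have hbnd : ∀ k, 1 ≤ k → ∀ ω, |η k ω| ≤ 1 := by
    intro k hk ω; rcases hval k hk ω with h | h <;> simp [h]
  have bint : ∀ (f : Ω → ℝ) (c : ℝ), StronglyMeasurable f → (∀ ω, |f ω| ≤ c) →
      Integrable f μ := by
    intro f c hf hb
    exact (integrable_const c).mono' hf.aestronglyMeasurable
      (ae_of_all _ (by simpa [Real.norm_eq_abs] using hb))
  have hηint : ∀ k, 1 ≤ k → Integrable (η k) μ :=
    fun k hk => bint _ 1 (hmeas k hk) (hbnd k hk)
  -- X : measurability, bounds, integrability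
  have hXfun : ∀ n, X n = fun ω => ∑ k ∈ Finset.Icc 1 n, η k ω := fun n => funext (hX n)
  have hXmeasF : ∀ n, StronglyMeasurable[ℱ n] (X n) := by
    intro n
    rw [hXfun n]
    refine Finset.stronglyMeasurable_fun_sum (Finset.Icc 1 n) (f := fun k ω => η k ω)
      fun k hk => ?_
    have hk' := Finset.mem_Icc.1 hk
    exact (hadapt k hk'.1).mono (ℱ.mono hk'.2)
  have hXmeas : ∀ n, StronglyMeasurable (X n) := fun n => (hXmeasF n).mono (ℱ.le n)
  have hXbnd : ∀ n ω, |X n ω| ≤ (n : ℝ) := by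
    intro n ω
    rw [hX]
    refine le_trans (Finset.abs_sum_le_sum_abs _ _) ?_
    have h1 : ∀ k ∈ Finset.Icc 1 n, |η k ω| ≤ 1 := fun k hk => hbnd k (Finset.mem_Icc.1 hk).1 ω
    refine le_trans (Finset.sum_le_sum h1) ?_
    simp [Nat.card_Icc]
  have hXint : ∀ n, Integrable (X n) μ := fun n => bint _ n (hXmeas n) (hXbnd n)
  -- the mean e
  set e : ℕ → ℝ := fun n => ∫ x, X n x ∂μ with hedef
  have hebnd : ∀ n, |e n| ≤ (n : ℝ) := by
    intro n
    calc |e n| ≤ ∫ x, |X n x| ∂μ := by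
          simpa [Real.norm_eq_abs] using norm_integral_le_integral_norm (f := X n) (μ := μ)
      _ ≤ ∫ _x, (n : ℝ) ∂μ := integral_mono (hXint n).abs (integrable_const _)
            (fun ω => hXbnd n ω)
      _ = n := by simp
  have hXsucc : ∀ n, X (n + 1) = fun ω => X n ω + η (n + 1) ω := by
    intro n
    funext ω
    rw [hX, hX, Finset.sum_Icc_succ_top (by omega : 1 ≤ n + 1)]
  have hηmean : ∀ n, 1 ≤ n → ∫ ω, η (n + 1) ω ∂μ = α * e n / n := by
    intro n hn
    have h1 : ∫ ω, (μ[η (n + 1)|ℱ n]) ω ∂μ = ∫ ω, η (n + 1) ω ∂μ :=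
      integral_condExp (ℱ.le n)
    rw [← h1, integral_congr_ae (hcond n hn)]
    have h2 : ∀ ω, α * (∑ k ∈ Finset.Icc 1 n, η k ω) / (n : ℝ) = α * X n ω / n := by
      intro ω; rw [← hX n ω]
    rw [integral_congr_ae (ae_of_all _ h2)]
    rw [integral_div, integral_const_mul]
  have herec : ∀ n, 1 ≤ n → e (n + 1) = e n * (((n : ℝ) + α) / n) := by
    intro n hn
    have hn0 : ((n : ℝ)) ≠ 0 := Nat.cast_ne_zero.2 (by omega)
    have h1 : e (n + 1) = e n + α * e n / n := by
      rw [hedef]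
      simp only
      rw [hXsucc n, integral_add (hXint n) (hηint (n + 1) (by omega)), hηmean n hn]
    rw [h1]
    field_simp
  -- conditional expectation of the centered process
  have hDcond : ∀ n, 1 ≤ n →
      μ[fun ω => X (n + 1) ω - e (n + 1)|ℱ n]
        =ᵐ[μ] fun ω => (X n ω - e n) * (((n : ℝ) + α) / n) := by
    intro n hn
    have hn0 : ((n : ℝ)) ≠ 0 := Nat.cast_ne_zero.2 (by omega)
    have hsub : (fun ω => X (n + 1) ω - e (n + 1)) = X (n + 1) - (fun _ => e (n + 1)) := rfl
    have h1 : μ[X (n + 1) - (fun _ => e (n + 1))|ℱ n]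
        =ᵐ[μ] μ[X (n + 1)|ℱ n] - μ[fun _ => e (n + 1)|ℱ n] :=
      condExp_sub (hXint (n + 1)) (integrable_const _) _
    have h2 : μ[fun _ => e (n + 1)|ℱ n] = fun _ => e (n + 1) := condExp_const (ℱ.le n) _
    have hXadd : X (n + 1) = X n + η (n + 1) := by rw [hXsucc n]; rfl
    have h3 : μ[X (n + 1)|ℱ n] =ᵐ[μ] μ[X n|ℱ n] + μ[η (n + 1)|ℱ n] := by
      rw [hXadd]; exact condExp_add (hXint n) (hηint (n + 1) (by omega)) _
    have h4 : μ[X n|ℱ n] = X n := condExp_of_stronglyMeasurable (ℱ.le n) (hXmeasF n) (hXint n)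
    rw [hsub]
    filter_upwards [h1, h3, hcond n hn] with ω hω1 hω3 hω5
    rw [hω1]
    simp only [Pi.sub_apply, Pi.add_apply, h2, h4] at hω3 ⊢
    rw [hω3, hω5, herec n hn, ← hX n ω]
    field_simp
  -- shifted filtration
  set G : Filtration ℕ m0 :=
    ⟨fun n => ℱ (n + 2), fun i j hij => ℱ.mono (by omega), fun i => ℱ.le (i + 2)⟩ with hGdef
  have hGle : ∀ n, G n ≤ m0 := fun n => ℱ.le (n + 2)
  -- the martingale M
  set M : ℕ → Ω → ℝ := fun n ω => (X (n + 2) ω - e (n + 2)) / a (n + 2) with hMdef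
  have hMmeasG : ∀ n, StronglyMeasurable[G n] (M n) := by
    intro n
    have h1 : M n = fun ω => (X (n + 2) ω - e (n + 2)) * (a (n + 2))⁻¹ := by
      funext ω; rw [hMdef]; simp only [div_eq_mul_inv]
    rw [h1]
    exact ((hXmeasF (n + 2)).sub stronglyMeasurable_const).mul_const _
  have hMbnd : ∀ n ω, |M n ω| ≤ 2 * ((n : ℝ) + 2) / a (n + 2) := by
    intro n ω
    simp only [hMdef]
    rw [abs_div, abs_of_pos (hapos (n + 2))]
    have h1 := hXbnd (n + 2) ω
    have h2 := hebnd (n + 2)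
    rw [abs_le] at h1 h2
    push_cast at h1 h2
    have habs : |X (n + 2) ω - e (n + 2)| ≤ 2 * ((n : ℝ) + 2) := by
      rw [abs_le]; constructor <;> nlinarith
    exact (div_le_div_iff_of_pos_right (hapos (n + 2))).2 habs
  have hMint : ∀ n, Integrable (M n) μ :=
    fun n => bint _ _ ((hMmeasG n).mono (hGle n)) (hMbnd n)
  -- martingale property of M
  have harec' : ∀ n : ℕ, a (n + 3) = a (n + 2) * ((((n : ℝ) + 2) + α) / ((n : ℝ) + 2)) := by
    intro n
    have := harec (n + 2) (by omega)
    push_cast at this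
    rw [show n + 2 + 1 = n + 3 from by omega] at this
    exact this
  have hMmart : ∀ n, μ[M (n + 1)|G n] =ᵐ[μ] M n := by
    intro n
    have hn2 : ((n : ℝ) + 2) ≠ 0 := by positivity
    have hfac : (0 : ℝ) < (((n : ℝ) + 2) + α) / ((n : ℝ) + 2) := by
      apply div_pos
      · have : (0 : ℝ) ≤ (n : ℝ) := Nat.cast_nonneg n
        linarith
      · linarith [Nat.cast_nonneg (α := ℝ) n]
    have hsmul : M (n + 1) = (a (n + 3))⁻¹ • (fun ω => X (n + 3) ω - e (n + 3)) := by
      funext ω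
      simp only [hMdef, Pi.smul_apply, smul_eq_mul]
      rw [show n + 1 + 2 = n + 3 from by omega]
      ring
    have h1 : μ[M (n + 1)|G n]
        =ᵐ[μ] (a (n + 3))⁻¹ • μ[(fun ω => X (n + 3) ω - e (n + 3))|G n] := by
      rw [hsmul]; exact condExp_smul _ _ _
    have h2 : μ[(fun ω => X (n + 3) ω - e (n + 3))|G n]
        =ᵐ[μ] fun ω => (X (n + 2) ω - e (n + 2)) * ((((n : ℝ) + 2) + α) / ((n : ℝ) + 2)) := by
      have h3 := hDcond (n + 2) (by omega)
      rw [show n + 2 + 1 = n + 3 from by omega] at h3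
      push_cast at h3
      exact h3
    filter_upwards [h1, h2] with ω hω1 hω2
    rw [hω1]
    simp only [Pi.smul_apply, smul_eq_mul]
    rw [hω2]
    simp only [hMdef]
    rw [harec' n]
    have key : ∀ A r D : ℝ, A ≠ 0 → r ≠ 0 → (A * r)⁻¹ * (D * r) = D / A := by
      intro A r D hA hr
      field_simp
    exact key _ _ _ (ne_of_gt (hapos (n + 2))) (ne_of_gt hfac)
  -- increment bound for M
  have hMdiff : ∀ n ω, |M (n + 1) ω - M n ω| ≤ 4 / a (n + 3) := by
    intro n ω
    have hn2 : ((n : ℝ) + 2) ≠ 0 := by positivity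
    have hfac : (0 : ℝ) < (((n : ℝ) + 2) + α) / ((n : ℝ) + 2) := by
      apply div_pos
      · linarith [Nat.cast_nonneg (α := ℝ) n]
      · linarith [Nat.cast_nonneg (α := ℝ) n]
    have hXs : X (n + 3) ω = X (n + 2) ω + η (n + 3) ω := by
      have := hXsucc (n + 2)
      rw [show n + 2 + 1 = n + 3 from by omega] at this
      rw [this]
    have hes : e (n + 3) = e (n + 2) * ((((n : ℝ) + 2) + α) / ((n : ℝ) + 2)) := by
      have := herec (n + 2) (by omega)
      rw [show n + 2 + 1 = n + 3 from by omega] at this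
      push_cast at this
      exact this
    have heq : M (n + 1) ω - M n ω
        = (η (n + 3) ω - α * e (n + 2) / ((n : ℝ) + 2)
            - (α / ((n : ℝ) + 2)) * (X (n + 2) ω - e (n + 2))) / a (n + 3) := by
      simp only [hMdef]
      rw [show n + 1 + 2 = n + 3 from by omega, hXs, hes, harec' n]
      have ha2 := ne_of_gt (hapos (n + 2))
      have hna : (0 : ℝ) < ((n : ℝ) + 2) + α := by linarith [Nat.cast_nonneg (α := ℝ) n]
      field_simp [hna.ne']
      ring
    rw [heq, abs_div, abs_of_pos (hapos (n + 3))]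
    refine (div_le_div_iff_of_pos_right (hapos (n + 3))).2 ?_
    have h1 := hbnd (n + 3) (by omega) ω
    have h2 := hebnd (n + 2)
    have h3 := hXbnd (n + 2) ω
    push_cast at h2 h3
    have hn2' : (0 : ℝ) < (n : ℝ) + 2 := by positivity
    have hηm : |α * e (n + 2) / ((n : ℝ) + 2)| ≤ 1 := by
      rw [abs_div, abs_mul, abs_of_pos hn2']
      rw [div_le_one hn2']
      calc |α| * |e (n + 2)| ≤ 1 * ((n : ℝ) + 2) :=
            mul_le_mul hαabs h2 (abs_nonneg _) zero_le_one
        _ = (n : ℝ) + 2 := one_mul _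
    have hXm : |(α / ((n : ℝ) + 2)) * (X (n + 2) ω - e (n + 2))| ≤ 2 := by
      rw [abs_mul, abs_div, abs_of_pos hn2']
      have hD : |X (n + 2) ω - e (n + 2)| ≤ 2 * ((n : ℝ) + 2) := by
        rw [abs_le] at h2 h3 ⊢
        constructor <;> nlinarith
      calc |α| / ((n : ℝ) + 2) * |X (n + 2) ω - e (n + 2)|
          ≤ 1 / ((n : ℝ) + 2) * (2 * ((n : ℝ) + 2)) := by
            refine mul_le_mul ?_ hD (abs_nonneg _) (by positivity)
            exact (div_le_div_iff_of_pos_right hn2').2 hαabs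
        _ = 2 := by field_simp
    calc |η (n + 3) ω - α * e (n + 2) / ((n : ℝ) + 2)
            - (α / ((n : ℝ) + 2)) * (X (n + 2) ω - e (n + 2))|
        ≤ |η (n + 3) ω - α * e (n + 2) / ((n : ℝ) + 2)|
            + |(α / ((n : ℝ) + 2)) * (X (n + 2) ω - e (n + 2))| := abs_sub _ _
      _ ≤ (|η (n + 3) ω| + |α * e (n + 2) / ((n : ℝ) + 2)|)
            + |(α / ((n : ℝ) + 2)) * (X (n + 2) ω - e (n + 2))| := by
            gcongr
            exact abs_sub _ _
      _ ≤ (1 + 1) + 2 := add_le_add (add_le_add h1 hηm) hXm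
      _ = 4 := by norm_num
  -- the normalizing sequence b
  set b : ℕ → ℝ := fun n => ((n : ℝ) + 3) / a (n + 3) with hbdef
  have hbpos : ∀ n, 0 < b n := by
    intro n
    apply div_pos (by positivity) (hapos (n + 3))
  have hbrec : ∀ n : ℕ, b (n + 1) = b n * ((((n : ℝ)) + 4) / (((n : ℝ)) + 3 + α)) := by
    intro n
    have hna : (0 : ℝ) < (n : ℝ) + 3 + α := by linarith [Nat.cast_nonneg (α := ℝ) n]
    have h1 : a (n + 4) = a (n + 3) * ((((n : ℝ) + 3) + α) / ((n : ℝ) + 3)) := by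
      have := harec (n + 3) (by omega)
      rw [show n + 3 + 1 = n + 4 from by omega] at this
      push_cast at this
      exact this
    simp only [hbdef]
    rw [show n + 1 + 3 = n + 4 from by omega, h1]
    push_cast
    have ha3 := ne_of_gt (hapos (n + 3))
    field_simp [hna.ne']
    ring
  have hbmono : Monotone b := by
    apply monotone_nat_of_le_succ
    intro n
    rw [hbrec n]
    have hna : (0 : ℝ) < (n : ℝ) + 3 + α := by linarith [Nat.cast_nonneg (α := ℝ) n]
    have hr : (1 : ℝ) ≤ (((n : ℝ)) + 4) / (((n : ℝ)) + 3 + α) := by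
      rw [le_div_iff₀ hna]
      linarith
    nlinarith [hbpos n]
  have hbtop : Tendsto b atTop atTop := by
    obtain ⟨S, hSdef⟩ : ∃ S : ℕ → ℝ, S = fun n => ∑ j ∈ range n, (1 : ℝ) / ((j : ℝ) + 4) :=
      ⟨_, rfl⟩
    have hSnn : ∀ n, 0 ≤ S n := by
      intro n
      rw [hSdef]
      exact Finset.sum_nonneg fun j _ => by positivity
    have hlow : ∀ n, b 0 * (1 + (1 - α) * S n) ≤ b n := by
      intro n
      induction n with
      | zero => simp [hSdef]
      | succ n ih =>
        have hna : (0 : ℝ) < (n : ℝ) + 3 + α := by linarith [Nat.cast_nonneg (α := ℝ) n]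
        have hn4 : (0 : ℝ) < (n : ℝ) + 4 := by positivity
        have hS : S (n + 1) = S n + 1 / ((n : ℝ) + 4) := by
          rw [hSdef]
          simp only
          rw [Finset.sum_range_succ]
          try push_cast
          try ring
        have hstep : (1 : ℝ) + (1 - α) / ((n : ℝ) + 4) ≤ (((n : ℝ)) + 4) / (((n : ℝ)) + 3 + α) := by
          have hl : (1 : ℝ) + (1 - α) / ((n : ℝ) + 4)
              = (((n : ℝ) + 4) + (1 - α)) / ((n : ℝ) + 4) := by field_simp
          rw [hl, div_le_div_iff₀ hn4 hna]
          nlinarith [sq_nonneg (1 - α)]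
        rw [hbrec n, hS]
        have hb0 : 0 < b 0 := hbpos 0
        have hprod : 0 ≤ (1 - α) * S n := mul_nonneg (by linarith) (hSnn n)
        have h2 : b 0 * (1 + (1 - α) * S n) * (1 + (1 - α) / ((n : ℝ) + 4))
            ≤ b n * ((((n : ℝ)) + 4) / (((n : ℝ)) + 3 + α)) := by
          refine mul_le_mul ih hstep ?_ (le_of_lt (hbpos n))
          have : 0 ≤ (1 - α) / ((n : ℝ) + 4) := by
            apply div_nonneg (by linarith) (by positivity)
          linarith
        refine le_trans ?_ h2
        have hcd : 0 ≤ (1 - α) * (1 / ((n : ℝ) + 4)) :=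
          mul_nonneg (by linarith) (by positivity)
        have h4 : b 0 ≤ b 0 * (1 + (1 - α) * S n) :=
          le_mul_of_one_le_right hb0.le (by linarith)
        have h5 := mul_le_mul_of_nonneg_right h4 hcd
        have key : b 0 * (1 + (1 - α) * (S n + 1 / ((n : ℝ) + 4)))
            = b 0 * (1 + (1 - α) * S n) + b 0 * ((1 - α) * (1 / ((n : ℝ) + 4))) := by ring
        have key2 : b 0 * (1 + (1 - α) * S n) * (1 + (1 - α) / ((n : ℝ) + 4))
            = b 0 * (1 + (1 - α) * S n)
              + b 0 * (1 + (1 - α) * S n) * ((1 - α) * (1 / ((n : ℝ) + 4))) := by ring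
        linarith [h5, key, key2]
    have hSH : ∀ n, (∑ i ∈ range (n + 3), (1 : ℝ) / ((i : ℝ) + 1))
        = (1 + 1/2 + 1/3) + S n := by
      intro n
      rw [← Finset.sum_range_add_sum_Ico _ (show 3 ≤ n + 3 by omega)]
      congr 1
      · norm_num [Finset.sum_range_succ]
      · rw [Finset.sum_Ico_eq_sum_range, hSdef]
        simp only
        rw [show n + 3 - 3 = n from by omega]
        refine Finset.sum_congr rfl fun j _ => ?_
        push_cast
        ring
    have hStop : Tendsto S atTop atTop := by
      have hH := Real.tendsto_sum_range_one_div_nat_succ_atTop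
      have h1 := hH.comp (tendsto_add_atTop_nat 3)
      have h2 := tendsto_atTop_add_const_right atTop (-(1 + 1/2 + 1/3 : ℝ)) h1
      refine h2.congr fun n => ?_
      simp only [Function.comp_apply]
      rw [hSH n]
      ring
    have hRHS : Tendsto (fun n => b 0 * (1 + (1 - α) * S n)) atTop atTop := by
      have hc : (0 : ℝ) < 1 - α := by linarith
      have h1 : Tendsto (fun n => (1 - α) * S n) atTop atTop :=
        hStop.const_mul_atTop hc
      have h2 : Tendsto (fun n => 1 + (1 - α) * S n) atTop atTop :=
        tendsto_atTop_add_const_left atTop 1 h1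
      exact h2.const_mul_atTop (hbpos 0)
    exact tendsto_atTop_mono hlow hRHS
  -- scaled increments g
  obtain ⟨g, hgdef⟩ : ∃ g : ℕ → Ω → ℝ, g = fun n ω => (M (n + 1) ω - M n ω) / b n := ⟨_, rfl⟩
  have hgmeas : ∀ n, StronglyMeasurable[G (n + 1)] (g n) := by
    intro n
    have h1 : g n = fun ω => (M (n + 1) ω - M n ω) * (b n)⁻¹ := by
      rw [hgdef]; funext ω; simp only [div_eq_mul_inv]
    rw [h1]
    exact ((hMmeasG (n + 1)).sub ((hMmeasG n).mono (G.mono (Nat.le_succ n)))).mul_const _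
  have hgbnd : ∀ n ω, |g n ω| ≤ 4 / ((n : ℝ) + 3) := by
    intro n ω
    rw [hgdef]
    simp only
    rw [abs_div, abs_of_pos (hbpos n), div_le_iff₀ (hbpos n)]
    have heq : 4 / ((n : ℝ) + 3) * b n = 4 / a (n + 3) := by
      rw [hbdef]
      simp only
      have h1 : ((n : ℝ) + 3) ≠ 0 := by positivity
      have h2 := ne_of_gt (hapos (n + 3))
      field_simp
    rw [heq]
    exact hMdiff n ω
  have hgint : ∀ n, Integrable (g n) μ :=
    fun n => bint _ _ ((hgmeas n).mono (hGle (n + 1))) (hgbnd n)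
  have hgbnd2 : ∀ n ω, |g n ω| ≤ 2 := by
    intro n ω
    refine (hgbnd n ω).trans ?_
    rw [div_le_iff₀ (by positivity : (0:ℝ) < (n : ℝ) + 3)]
    have : (0:ℝ) ≤ (n : ℝ) := Nat.cast_nonneg n
    linarith
  -- the martingale N
  obtain ⟨N, hNdef⟩ : ∃ N : ℕ → Ω → ℝ, N = fun n ω => ∑ k ∈ range n, g k ω := ⟨_, rfl⟩
  have hNrec : ∀ n ω, N (n + 1) ω = N n ω + g n ω := by
    intro n ω
    rw [hNdef]
    simp only
    rw [Finset.sum_range_succ]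
  have hNmeas : ∀ n, StronglyMeasurable[G n] (N n) := by
    intro n
    rw [hNdef]
    refine Finset.stronglyMeasurable_fun_sum (range n) (f := fun k ω => g k ω) fun k hk => ?_
    exact (hgmeas k).mono (G.mono (Finset.mem_range.1 hk))
  have hNbnd : ∀ n ω, |N n ω| ≤ 2 * n := by
    intro n ω
    rw [hNdef]
    simp only
    refine le_trans (Finset.abs_sum_le_sum_abs _ _) ?_
    calc ∑ k ∈ range n, |g k ω| ≤ ∑ _k ∈ range n, (2:ℝ) :=
          Finset.sum_le_sum fun k _ => hgbnd2 k ω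
      _ = 2 * n := by simp [mul_comm]
  have hNint : ∀ n, Integrable (N n) μ :=
    fun n => bint _ _ ((hNmeas n).mono (hGle n)) (hNbnd n)
  have hgcond : ∀ n, μ[g n|G n] =ᵐ[μ] 0 := by
    intro n
    have h1 : g n = (b n)⁻¹ • (M (n + 1) - M n) := by
      rw [hgdef]
      funext ω
      simp only [Pi.smul_apply, Pi.sub_apply, smul_eq_mul, div_eq_mul_inv]
      ring
    rw [h1]
    refine (condExp_smul ((b n)⁻¹) (M (n + 1) - M n) _).trans ?_
    have h3 : μ[M (n + 1) - M n|G n] =ᵐ[μ] μ[M (n + 1)|G n] - μ[M n|G n] :=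
      condExp_sub (hMint (n + 1)) (hMint n) _
    have h4 : μ[M n|G n] = M n := condExp_of_stronglyMeasurable (hGle n) (hMmeasG n) (hMint n)
    filter_upwards [h3, hMmart n] with ω hω3 hω5
    simp only [Pi.smul_apply, smul_eq_mul, Pi.zero_apply]
    rw [hω3]
    simp only [Pi.sub_apply, h4]
    rw [hω5]
    ring
  have hNmart : Martingale N G μ := by
    refine martingale_nat (fun n => hNmeas n) hNint fun n => ?_
    have h1 : N (n + 1) = N n + g n := by funext ω; rw [hNrec n ω]; rfl
    rw [h1]
    have h2 : μ[N n + g n|G n] =ᵐ[μ] μ[N n|G n] + μ[g n|G n] := condExp_add (hNint n) (hgint n) _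
    have h3 : μ[N n|G n] = N n := condExp_of_stronglyMeasurable (hGle n) (hNmeas n) (hNint n)
    refine EventuallyEq.symm (h2.trans ?_)
    filter_upwards [hgcond n] with ω hω
    simp only [Pi.add_apply, h3]
    rw [hω]
    simp
  -- integrability of products
  have hNgint : ∀ n, Integrable (fun ω => N n ω * g n ω) μ := by
    intro n
    refine bint _ (2 * n * 2) (((hNmeas n).mono (hGle n)).mul ((hgmeas n).mono (hGle (n + 1))))
      fun ω => ?_
    rw [abs_mul]
    exact mul_le_mul (hNbnd n ω) (hgbnd2 n ω) (abs_nonneg _) (by positivity)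
  have hN2int : ∀ n, Integrable (fun ω => (N n ω) ^ 2) μ := by
    intro n
    have h1 : (fun ω => (N n ω) ^ 2) = fun ω => N n ω * N n ω := funext fun ω => by ring
    rw [h1]
    refine bint _ (2 * n * (2 * n)) (((hNmeas n).mono (hGle n)).mul ((hNmeas n).mono (hGle n)))
      fun ω => ?_
    rw [abs_mul]
    exact mul_le_mul (hNbnd n ω) (hNbnd n ω) (abs_nonneg _) (by positivity)
  have hg2int : ∀ n, Integrable (fun ω => (g n ω) ^ 2) μ := by
    intro n
    have h1 : (fun ω => (g n ω) ^ 2) = fun ω => g n ω * g n ω := funext fun ω => by ring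
    rw [h1]
    refine bint _ (2 * 2) (((hgmeas n).mono (hGle (n + 1))).mul ((hgmeas n).mono (hGle (n + 1))))
      fun ω => ?_
    rw [abs_mul]
    exact mul_le_mul (hgbnd2 n ω) (hgbnd2 n ω) (abs_nonneg _) (by positivity)
  -- the cross term vanishes
  have hNg : ∀ n, ∫ ω, N n ω * g n ω ∂μ = 0 := by
    intro n
    have hprodeq : (fun ω => N n ω * g n ω) = N n * g n := rfl
    have hpull : μ[N n * g n|G n] =ᵐ[μ] N n * μ[g n|G n] :=
      condExp_mul_of_stronglyMeasurable_left (hNmeas n) (hprodeq ▸ hNgint n) (hgint n)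
    have h0 : ∫ ω, (μ[N n * g n|G n]) ω ∂μ = ∫ ω, (N n * g n) ω ∂μ := integral_condExp (hGle n)
    have hzero : (N n * μ[g n|G n] : Ω → ℝ) =ᵐ[μ] fun _ => (0 : ℝ) := by
      filter_upwards [hgcond n] with ω hω
      simp only [Pi.mul_apply]
      rw [hω]
      simp
    calc ∫ ω, N n ω * g n ω ∂μ = ∫ ω, (μ[N n * g n|G n]) ω ∂μ := h0.symm
      _ = 0 := by
          rw [integral_congr_ae (hpull.trans hzero)]
          simp
  -- L² bound
  have hNsq : ∀ n, ∫ ω, (N n ω) ^ 2 ∂μ ≤ 16 := by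
    have key : ∀ n, ∫ ω, (N n ω) ^ 2 ∂μ ≤ 16 * (1 / 2 - 1 / ((n : ℝ) + 2)) := by
      intro n
      induction n with
      | zero =>
        have h1 : ∀ ω, (N 0 ω) ^ 2 = 0 := by
          intro ω
          rw [hNdef]
          simp
        rw [integral_congr_ae (ae_of_all _ h1)]
        norm_num
      | succ n ih =>
        have hexp : ∀ ω, (N (n + 1) ω) ^ 2
            = (N n ω) ^ 2 + (2 * (N n ω * g n ω) + (g n ω) ^ 2) := by
          intro ω
          rw [hNrec n ω]
          ring
        have hgsq : ∀ ω, (g n ω) ^ 2 ≤ 16 * (1 / ((n : ℝ) + 2) - 1 / ((n : ℝ) + 3)) := by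
          intro ω
          have h1 := hgbnd n ω
          have h2 : (g n ω) ^ 2 ≤ (4 / ((n : ℝ) + 3)) ^ 2 := by
            rw [← sq_abs (g n ω)]
            exact pow_le_pow_left₀ (abs_nonneg _) h1 2
          refine h2.trans ?_
          have hn2 : (0 : ℝ) < (n : ℝ) + 2 := by positivity
          have hn3 : (0 : ℝ) < (n : ℝ) + 3 := by positivity
          rw [show (16 : ℝ) * (1 / ((n : ℝ) + 2) - 1 / ((n : ℝ) + 3))
            = 16 / (((n : ℝ) + 2) * ((n : ℝ) + 3)) from by field_simp; ring, div_pow,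
            div_le_div_iff₀ (by positivity) (by positivity)]
          nlinarith
        have hstep : ∫ ω, (N (n + 1) ω) ^ 2 ∂μ
            = ∫ ω, (N n ω) ^ 2 ∂μ + (2 * ∫ ω, N n ω * g n ω ∂μ + ∫ ω, (g n ω) ^ 2 ∂μ) := by
          rw [integral_congr_ae (ae_of_all _ hexp),
            integral_add (hN2int n)
              (show Integrable (fun ω => 2 * (N n ω * g n ω) + (g n ω) ^ 2) μ from
                ((hNgint n).const_mul 2).add (hg2int n)),
            integral_add
              (show Integrable (fun ω => 2 * (N n ω * g n ω)) μ from (hNgint n).const_mul 2)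
              (hg2int n), integral_const_mul]
        have hg2 : ∫ ω, (g n ω) ^ 2 ∂μ ≤ 16 * (1 / ((n : ℝ) + 2) - 1 / ((n : ℝ) + 3)) := by
          calc ∫ ω, (g n ω) ^ 2 ∂μ
              ≤ ∫ _ω, (16 : ℝ) * (1 / ((n : ℝ) + 2) - 1 / ((n : ℝ) + 3)) ∂μ :=
                integral_mono (hg2int n) (integrable_const _) hgsq
            _ = 16 * (1 / ((n : ℝ) + 2) - 1 / ((n : ℝ) + 3)) := by simp
        rw [hstep, hNg n]
        have hcast : ((n + 1 : ℕ) : ℝ) + 2 = (n : ℝ) + 3 := by push_cast; ring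
        rw [hcast]
        linarith
    intro n
    refine (key n).trans ?_
    have : (0 : ℝ) < 1 / ((n : ℝ) + 2) := by positivity
    linarith
  -- L¹ bound
  have hL1 : ∀ n, eLpNorm (N n) 1 μ ≤ ((9 : ℝ≥0) : ℝ≥0∞) := by
    intro n
    rw [eLpNorm_one_eq_lintegral_enorm]
    have hi1 : Integrable (fun ω => (1 + (N n ω) ^ 2) / 2) μ :=
      ((integrable_const 1).add (hN2int n)).div_const 2
    have hptw : ∀ ω, (‖N n ω‖₊ : ℝ≥0∞) ≤ ENNReal.ofReal ((1 + (N n ω) ^ 2) / 2) := by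
      intro ω
      rw [show ((‖N n ω‖₊ : ℝ≥0∞)) = ENNReal.ofReal ‖N n ω‖ from (ofReal_norm _).symm]
      apply ENNReal.ofReal_le_ofReal
      rw [Real.norm_eq_abs]
      nlinarith [sq_nonneg (|N n ω| - 1), sq_abs (N n ω)]
    calc ∫⁻ ω, (‖N n ω‖₊ : ℝ≥0∞) ∂μ
        ≤ ∫⁻ ω, ENNReal.ofReal ((1 + (N n ω) ^ 2) / 2) ∂μ := lintegral_mono hptw
      _ = ENNReal.ofReal (∫ ω, (1 + (N n ω) ^ 2) / 2 ∂μ) :=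
          (ofReal_integral_eq_lintegral_ofReal hi1 (ae_of_all _ fun ω => by positivity)).symm
      _ ≤ ((9 : ℝ≥0) : ℝ≥0∞) := by
          have h2 : ∫ ω, (1 + (N n ω) ^ 2) / 2 ∂μ = (1 + ∫ ω, (N n ω) ^ 2 ∂μ) / 2 := by
            rw [integral_div, integral_add (integrable_const 1) (hN2int n)]
            simp
          have h3 : ∫ ω, (1 + (N n ω) ^ 2) / 2 ∂μ ≤ 9 := by
            rw [h2]
            linarith [hNsq n]
          calc ENNReal.ofReal (∫ ω, (1 + (N n ω) ^ 2) / 2 ∂μ)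
              ≤ ENNReal.ofReal 9 := ENNReal.ofReal_le_ofReal h3
            _ = ((9 : ℝ≥0) : ℝ≥0∞) := by norm_num
  -- almost sure convergence of N
  have hconv := hNmart.submartingale.exists_ae_tendsto_of_bdd hL1
  filter_upwards [hconv] with ω hω
  obtain ⟨c, hc⟩ := hω
  have hc' : Tendsto (fun n => ∑ k ∈ range n, (M (k + 1) ω - M k ω) / b k) atTop (𝓝 c) := by
    refine hc.congr fun n => ?_
    rw [hNdef]
    simp only
    refine Finset.sum_congr rfl fun k _ => ?_
    rw [hgdef]
  have hk := erw_kron hbmono (hbpos 0) hbtop hc'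
  have hsum : ∀ n, ∑ k ∈ range (n + 1), (M (k + 1) ω - M k ω) = M (n + 1) ω - M 0 ω :=
    fun n => Finset.sum_range_sub (fun k => M k ω) (n + 1)
  have h0' : Tendsto (fun n => M 0 ω * (b n)⁻¹) atTop (𝓝 0) := by
    have := hbtop.inv_tendsto_atTop.const_mul (M 0 ω)
    simpa using this
  have hMten : Tendsto (fun n => M (n + 1) ω / b n) atTop (𝓝 0) := by
    have h2 := hk.add h0'
    rw [add_zero] at h2
    refine h2.congr fun n => ?_
    rw [hsum n]
    have hbn := ne_of_gt (hbpos n)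
    field_simp
    ring
  have hfin : Tendsto (fun n => (X (n + 3) ω - e (n + 3)) / ((n : ℝ) + 3)) atTop (𝓝 0) := by
    refine hMten.congr fun n => ?_
    simp only [hMdef, hbdef]
    rw [show n + 1 + 2 = n + 3 from by omega]
    have h1 := ne_of_gt (hapos (n + 3))
    have h2 : ((n : ℝ) + 3) ≠ 0 := by positivity
    field_simp
  rw [← tendsto_add_atTop_iff_nat 3]
  refine hfin.congr fun n => ?_
  simp only [hedef]
  push_cast
  ring
end

section
/- For the symmetric elephant random walk (q = 1/2), the auxiliary sequence H_k = (n+k-1) E[\eta_{n+k} X_n] satisfies the recursion H_{k+1} = (1 + (2p-1)/(n+k-1)) H_k with H_1 = (2p-1) E[X_n^2], and consequently H_k = ((n-1)! \Gamma(2p+n+k-2) / ((n+k-2)! \Gamma(2p-1+n))) H_1 for all k \ge 1. -/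
open Finset Filter MeasureTheory

theorem stmt17 {Ω : Type*} {m0 : MeasurableSpace Ω} (μ : Measure Ω) [IsProbabilityMeasure μ]
    (ℱ : Filtration ℕ m0) (p : ℝ) (hp : p ∈ Set.Ioo (0 : ℝ) 1)
    (η : ℕ → Ω → ℝ)
    (hval : ∀ n, 1 ≤ n → ∀ ω, η n ω = 1 ∨ η n ω = -1)
    (hadapt : ∀ n, 1 ≤ n → StronglyMeasurable[ℱ n] (η n))
    (hη1 : ∫ ω, η 1 ω ∂μ = 0)
    (hcond : ∀ m, 1 ≤ m →
      μ[η (m + 1) | ℱ m] =ᵐ[μ] fun ω => (2 * p - 1) * (∑ k ∈ Finset.Icc 1 m, η k ω) / m)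
    (X : ℕ → Ω → ℝ) (hX : ∀ m ω, X m ω = ∑ k ∈ Finset.Icc 1 m, η k ω)
    (n : ℕ) (hn : 1 ≤ n) (H : ℕ → ℝ)
    (hH : ∀ k, 1 ≤ k → H k = ((n : ℝ) + k - 1) * ∫ ω, η (n + k) ω * X n ω ∂μ) :
    H 1 = (2 * p - 1) * ∫ ω, (X n ω) ^ 2 ∂μ ∧
    (∀ k, 1 ≤ k → H (k + 1) = (1 + (2 * p - 1) / ((n : ℝ) + k - 1)) * H k) ∧
    (∀ k, 1 ≤ k →
      H k = ((Nat.factorial (n - 1) : ℝ) * Real.Gamma (2 * p + n + k - 2) /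
              ((Nat.factorial (n + k - 2) : ℝ) * Real.Gamma (2 * p - 1 + n))) * H 1) := by
  have hmeas : ∀ k, 1 ≤ k → StronglyMeasurable (η k) :=
    fun k hk => (hadapt k hk).mono (ℱ.le k)
  have hbnd : ∀ k, 1 ≤ k → ∀ ω, |η k ω| ≤ 1 := by
    intro k hk ω
    rcases hval k hk ω with h | h <;> rw [h] <;> norm_num
  have hXmeasF : ∀ m, StronglyMeasurable[ℱ m] (X m) := by
    intro m
    have h1 : X m = fun ω => ∑ k ∈ Finset.Icc 1 m, η k ω := funext (hX m)
    rw [h1]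
    exact Finset.stronglyMeasurable_fun_sum _ fun k hk =>
      (hadapt k (Finset.mem_Icc.mp hk).1).mono (ℱ.mono (Finset.mem_Icc.mp hk).2)
  have hXmeas : ∀ m, StronglyMeasurable (X m) :=
    fun m => (hXmeasF m).mono (ℱ.le m)
  have hXbnd : ∀ m ω, |X m ω| ≤ m := by
    intro m ω
    rw [hX m ω]
    calc |∑ k ∈ Finset.Icc 1 m, η k ω| ≤ ∑ k ∈ Finset.Icc 1 m, |η k ω| :=
          Finset.abs_sum_le_sum_abs _ _
      _ ≤ ∑ k ∈ Finset.Icc 1 m, 1 := Finset.sum_le_sum fun k hk =>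
          hbnd k (Finset.mem_Icc.mp hk).1 ω
      _ = m := by simp
  have hint : ∀ (f : Ω → ℝ) (C : ℝ), StronglyMeasurable f → (∀ ω, |f ω| ≤ C) →
      Integrable f μ := by
    intro f C hf hC
    exact (integrable_const C).mono' hf.aestronglyMeasurable
      (Filter.Eventually.of_forall fun ω => by simpa using hC ω)
  -- key identity
  have key : ∀ m, n ≤ m → ∫ ω, η (m+1) ω * X n ω ∂μ
      = (2*p-1)/m * ∫ ω, X m ω * X n ω ∂μ := by
    intro m hm
    have hm1 : 1 ≤ m := le_trans hn hm
    have hηint : Integrable (η (m+1)) μ := hint _ 1 (hmeas _ (by omega)) (hbnd _ (by omega))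
    have hXnηmeas : StronglyMeasurable (X n * η (m+1)) :=
      (hXmeas n).mul (hmeas _ (by omega))
    have hprod : Integrable (X n * η (m+1)) μ := by
      refine hint _ n hXnηmeas fun ω => ?_
      have h1 := hXbnd n ω
      have h2 := hbnd (m+1) (by omega) ω
      calc |(X n * η (m+1)) ω| = |X n ω| * |η (m+1) ω| := abs_mul _ _
        _ ≤ n * 1 := mul_le_mul h1 h2 (abs_nonneg _) (by positivity)
        _ = n := mul_one _
    have hXnF : StronglyMeasurable[ℱ m] (X n) := (hXmeasF n).mono (ℱ.mono hm)
    have hce := condExp_mul_of_stronglyMeasurable_left (m := ℱ m) (μ := μ) hXnF hprod hηint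
    calc ∫ ω, η (m+1) ω * X n ω ∂μ = ∫ ω, (X n * η (m+1)) ω ∂μ := by
          simp [mul_comm]
      _ = ∫ ω, (μ[X n * η (m+1)|ℱ m]) ω ∂μ := (integral_condExp (ℱ.le m)).symm
      _ = ∫ ω, X n ω * ((2*p-1) * X m ω / m) ∂μ := by
          refine integral_congr_ae ?_
          filter_upwards [hce, hcond m hm1] with ω h1 h2
          rw [h1]
          simp only [Pi.mul_apply, h2, hX m ω]
      _ = ∫ ω, (2*p-1)/m * (X m ω * X n ω) ∂μ := by
          refine integral_congr_ae (Filter.Eventually.of_forall fun ω => ?_)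
          ring
      _ = (2*p-1)/m * ∫ ω, X m ω * X n ω ∂μ := integral_const_mul _ _
  have hcast : ∀ k : ℕ, 1 ≤ k → ((n + k - 1 : ℕ) : ℝ) = (n:ℝ) + k - 1 := by
    intro k hk
    have : 1 ≤ n + k := by omega
    push_cast [Nat.cast_sub this]
    ring
  have hpos : ∀ k : ℕ, 1 ≤ k → (0:ℝ) < (n:ℝ) + k - 1 := by
    intro k hk
    have h1 : (1:ℝ) ≤ (n:ℝ) := by exact_mod_cast hn
    have h2 : (1:ℝ) ≤ (k:ℝ) := by exact_mod_cast hk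
    linarith
  have hkey2 : ∀ k, 1 ≤ k → H k = (2*p-1) * ∫ ω, X (n+k-1) ω * X n ω ∂μ := by
    intro k hk
    have h1 : (n + k - 1) + 1 = n + k := by omega
    have h3 := key (n + k - 1) (by omega)
    rw [h1, hcast k hk] at h3
    rw [hH k hk, h3]
    have hne := (hpos k hk).ne'
    field_simp
  have hηXint : ∀ a, 1 ≤ a → Integrable (fun ω => η a ω * X n ω) μ := by
    intro a ha
    refine hint _ n ((hmeas a ha).mul (hXmeas n)) fun ω => ?_
    have h1 := hXbnd n ω
    have h2 := hbnd a ha ω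
    calc |η a ω * X n ω| = |η a ω| * |X n ω| := abs_mul _ _
      _ ≤ 1 * n := mul_le_mul h2 h1 (abs_nonneg _) (by positivity)
      _ = n := one_mul _
  have hXXint : ∀ m, Integrable (fun ω => X m ω * X n ω) μ := by
    intro m
    refine hint _ ((m:ℝ) * n) ((hXmeas m).mul (hXmeas n)) fun ω => ?_
    calc |X m ω * X n ω| = |X m ω| * |X n ω| := abs_mul _ _
      _ ≤ m * n := mul_le_mul (hXbnd m ω) (hXbnd n ω) (abs_nonneg _) (by positivity)
  -- part 2
  have part2 : ∀ k, 1 ≤ k → H (k + 1) = (1 + (2 * p - 1) / ((n : ℝ) + k - 1)) * H k := by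
    intro k hk
    have hne := (hpos k hk).ne'
    have hXsplit : ∀ ω, X (n+k) ω = X (n+k-1) ω + η (n+k) ω := by
      intro ω
      obtain ⟨m, hm⟩ : ∃ m, n + k = m + 1 := ⟨n + k - 1, by omega⟩
      rw [hX, hX, hm, Finset.sum_Icc_succ_top (by omega), Nat.add_sub_cancel]
    have hIk : ∫ ω, η (n+k) ω * X n ω ∂μ = H k / ((n:ℝ) + k - 1) := by
      rw [hH k hk]; field_simp
    have e1 : H (k+1) = (2*p-1) * ∫ ω, X (n+k) ω * X n ω ∂μ := by
      have := hkey2 (k+1) (by omega)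
      rwa [show n + (k+1) - 1 = n + k by omega] at this
    have e2 : ∫ ω, X (n+k) ω * X n ω ∂μ
        = (∫ ω, X (n+k-1) ω * X n ω ∂μ) + ∫ ω, η (n+k) ω * X n ω ∂μ := by
      rw [← integral_add (hXXint (n+k-1)) (hηXint (n+k) (by omega))]
      refine integral_congr_ae (Filter.Eventually.of_forall fun ω => ?_)
      simp only [hXsplit]
      ring
    have e3 : H k = (2*p-1) * ∫ ω, X (n+k-1) ω * X n ω ∂μ := hkey2 k hk
    rw [e1, e2, mul_add, ← e3, hIk]
    field_simp
  -- part 1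
  have part1 : H 1 = (2 * p - 1) * ∫ ω, (X n ω) ^ 2 ∂μ := by
    have := hkey2 1 le_rfl
    rw [show n + 1 - 1 = n by omega] at this
    rw [this]
    congr 1
    refine integral_congr_ae (Filter.Eventually.of_forall fun ω => ?_)
    ring
  refine ⟨part1, part2, ?_⟩
  -- part 3
  have hn1 : (1:ℝ) ≤ (n:ℝ) := by exact_mod_cast hn
  have hΓpos : 0 < Real.Gamma (2 * p - 1 + n) :=
    Real.Gamma_pos_of_pos (by linarith [hp.1])
  intro k hk
  induction k with
  | zero => omega
  | succ k ih =>
    rcases Nat.eq_or_lt_of_le hk with h1 | h1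
    · -- k + 1 = 1, i.e. k = 0
      have hk0 : k = 0 := by omega
      subst hk0
      have hfpos : (0:ℝ) < (Nat.factorial (n-1) : ℝ) := by
        exact_mod_cast Nat.factorial_pos (n-1)
      simp only [Nat.zero_add, Nat.cast_one]
      rw [show n + 1 - 2 = n - 1 by omega]
      rw [show (2 * p + (n:ℝ) + 1 - 2) = 2 * p - 1 + n by ring]
      rw [div_self (mul_pos hfpos hΓpos).ne', one_mul]
    · -- k ≥ 1
      have hk1 : 1 ≤ k := by omega
      have ihh := ih hk1
      have hrec := part2 k hk1
      have hΓne : (2 * p + (n:ℝ) + k - 2) ≠ 0 := by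
        have h2 : (1:ℝ) ≤ (k:ℝ) := by exact_mod_cast hk1
        have := hp.1
        intro h
        linarith
      have hΓstep : Real.Gamma (2 * p + (n:ℝ) + (k+1:ℕ) - 2)
          = (2 * p + (n:ℝ) + k - 2) * Real.Gamma (2 * p + (n:ℝ) + k - 2) := by
        rw [show (2 * p + (n:ℝ) + (k+1:ℕ) - 2) = (2 * p + (n:ℝ) + k - 2) + 1 by
          push_cast; ring]
        exact Real.Gamma_add_one hΓne
      have hfstep : (Nat.factorial (n + (k+1) - 2) : ℝ)
          = ((n:ℝ) + k - 1) * (Nat.factorial (n + k - 2) : ℝ) := by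
        rw [show n + (k+1) - 2 = (n + k - 2) + 1 by omega, Nat.factorial_succ]
        push_cast [Nat.cast_sub (show 2 ≤ n + k by omega)]
        ring
      have hne := (hpos k hk1).ne'
      have hfpos : (0:ℝ) < (Nat.factorial (n+k-2) : ℝ) := by
        exact_mod_cast Nat.factorial_pos (n+k-2)
      rw [hrec, ihh, hΓstep, hfstep]
      field_simp
      ring
end
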